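/- arXiv:2605.14425 — 4 statements merged into one kernel-verified Lean document; each statement's English description precedes it below -/
import Mathlib

section
/- For any complex numbers ω₁₁, ω₁₃, ω₃₃ satisfying |ω₁₃|² + 3|ω₃₃|² ≤ 1/3, |2ω₁₃ - ω₁₁²| ≤ 1, and |ω₁₁| ≤ 1, one has |−ω₃₃ + 4ω₁₁ω₁₃ − 3ω₁₁³| ≤ 10/3. -/
/-- Key algebraic estimate for `|Γ₃| ≤ 10/3`. -/
theorem key_estimate_Gamma3 (ω11 ω13 ω33 : ℂ)
    (h1 : ‖ω13‖ ^ 2 + 3 * ‖ω33‖ ^ 2 ≤ 1 / 3)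
    (h2 : ‖2 * ω13 - ω11 ^ 2‖ ≤ 1)
    (h3 : ‖ω11‖ ≤ 1) :
    ‖-ω33 + 4 * ω11 * ω13 - 3 * ω11 ^ 3‖ ≤ 10 / 3 := by
  have h33 : ‖ω33‖ ≤ 1 / 3 := by
    nlinarith [norm_nonneg ω33, norm_nonneg ω13, sq_nonneg ‖ω13‖]
  have hrw : (-ω33 + 4 * ω11 * ω13 - 3 * ω11 ^ 3)
      = -ω33 + 2 * ω11 * (2 * ω13 - ω11 ^ 2) + -(ω11 ^ 3) := by ring
  rw [hrw]
  calc ‖-ω33 + 2 * ω11 * (2 * ω13 - ω11 ^ 2) + -(ω11 ^ 3)‖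
      ≤ ‖-ω33 + 2 * ω11 * (2 * ω13 - ω11 ^ 2)‖ + ‖-(ω11 ^ 3)‖ :=
        norm_add_le _ _
    _ ≤ ‖-ω33‖ + ‖2 * ω11 * (2 * ω13 - ω11 ^ 2)‖
          + ‖-(ω11 ^ 3)‖ := by
        gcongr; exact norm_add_le _ _
    _ ≤ 1 / 3 + 2 * 1 * 1 + 1 := by
        simp only [norm_neg, norm_mul, norm_pow, Complex.norm_ofNat]
        gcongr <;> simp [h33, h2, h3, pow_le_one₀ (norm_nonneg ω11) h3]
    _ ≤ 10 / 3 := by norm_num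
end

section
/- For complex numbers ω₁₁, ω₁₃, ω₃₃ with |ω₁₁| ≤ 1, |ω₁₃|² + 3|ω₃₃|² ≤ 1/3 and |2ω₁₃ − ω₁₁²| ≤ 1, one has |ω₃₃ − 3ω₁₁ω₁₃ + (3/2)ω₁₁³| ≤ 11/6. -/
/-- Key estimate in the proof that `|Γ₃| - |Γ₂| ≤ 11/6`. -/
theorem key_estimate_diff (ω11 ω13 ω33 : ℂ)
    (h3 : ‖ω11‖ ≤ 1)
    (h1 : ‖ω13‖ ^ 2 + 3 * ‖ω33‖ ^ 2 ≤ 1 / 3)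
    (h2 : ‖2 * ω13 - ω11 ^ 2‖ ≤ 1) :
    ‖ω33 - 3 * ω11 * ω13 + (3 / 2) * ω11 ^ 3‖ ≤ 11 / 6 := by
  have h33 : ‖ω33‖ ≤ 1 / 3 := by
    nlinarith [sq_nonneg ‖ω13‖, norm_nonneg ω33,
      sq_nonneg (‖ω33‖ - 1/3)]
  have key : ω33 - 3 * ω11 * ω13 + (3 / 2) * ω11 ^ 3
      = ω33 - (3/2) * ω11 * (2 * ω13 - ω11 ^ 2) := by ring
  rw [key]
  calc ‖ω33 - (3/2) * ω11 * (2 * ω13 - ω11 ^ 2)‖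
      ≤ ‖ω33‖ + ‖(3/2) * ω11 * (2 * ω13 - ω11 ^ 2)‖ := by
        exact (norm_sub_le _ _).trans_eq rfl
    _ ≤ 1/3 + (3/2) * 1 * 1 := by
        rw [norm_mul, norm_mul]
        have h32 : ‖(3:ℂ)/2‖ = 3/2 := by
          rw [norm_div]; simp
        rw [h32]
        gcongr
    _ ≤ 11/6 := by norm_num
end

section
/- For complex numbers a₂, a₃ with |a₂| ≤ 1 and |a₃ − a₂²| ≤ (1/3)(1 − |a₂|²), one has |−a₃ + (3/2)a₂²| ≥ |a₂| − √(2/5); equivalently (1/2)|−a₃ + (3/2)a₂²| − (1/2)|a₂| ≥ −√10/10. -/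
/-- Lower bound computation for `|Γ₂| - |Γ₁| ≥ -√10/10` in the convex case. -/
theorem lower_bound_diff_convex (a2 a3 : ℂ)
    (h2 : ‖a2‖ ≤ 1)
    (h3 : ‖a3 - a2 ^ 2‖ ≤ (1 / 3) * (1 - ‖a2‖ ^ 2)) :
    ‖-a3 + (3 / 2) * a2 ^ 2‖ ≥ ‖a2‖ - Real.sqrt (2 / 5) ∧
      (1 / 2) * ‖-a3 + (3 / 2) * a2 ^ 2‖ - (1 / 2) * ‖a2‖ ≥
        -(Real.sqrt 10) / 10 := by
  set x := ‖a2‖ with hx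
  set s := Real.sqrt (2 / 5) with hsdef
  have hs0 : (0:ℝ) ≤ s := Real.sqrt_nonneg _
  have hs : s ^ 2 = 2 / 5 := Real.sq_sqrt (by norm_num)
  have hx0 : (0:ℝ) ≤ x := norm_nonneg _
  have habs : ‖-a3 + (3 / 2) * a2 ^ 2‖ ≥ (1/2) * x ^ 2 - (1/3) * (1 - x ^ 2) := by
    have heq : -a3 + (3 / 2) * a2 ^ 2 = (1/2 : ℂ) * a2 ^ 2 - (a3 - a2 ^ 2) := by ring
    rw [heq]
    have h1 : ‖(1/2 : ℂ) * a2 ^ 2‖ = (1/2) * x ^ 2 := by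
      rw [norm_mul, norm_pow, ← hx]
      norm_num
    have := norm_sub_norm_le ((1/2 : ℂ) * a2 ^ 2) (a3 - a2 ^ 2)
    rw [h1] at this
    linarith
  have key : ‖-a3 + (3 / 2) * a2 ^ 2‖ ≥ x - s := by
    rcases le_or_gt x s with h | h
    · have := norm_nonneg (-a3 + (3 / 2) * a2 ^ 2)
      linarith
    · have hxs : 0 ≤ x - s := by linarith
      have h35 : (3:ℝ)/5 ≤ s := by
        nlinarith [hs, hs0]
      have : (x - s) * ((5/6) * (x + s) - 1) ≥ 0 := by
        apply mul_nonneg hxs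
        nlinarith
      nlinarith [habs, hs]
  constructor
  · exact key
  · have h10 : Real.sqrt 10 = 5 * s := by
      rw [show (10:ℝ) = (5 * s) ^ 2 by nlinarith [hs]]
      exact Real.sqrt_sq (by positivity)
    rw [h10]
    linarith [key]
end

section
/- For complex numbers a₂, a₃, a₄ expressible as a₂ = 2ω₁₁, a₃ = 2ω₁₃ + 3ω₁₁², a₄ = 2ω₃₃ + 8ω₁₁ω₁₃ + (10/3)ω₁₁³ with |ω₁₁| ≤ 1, |ω₁₃|² + 3|ω₃₃|² ≤ 1/3 and |2ω₁₃ − ω₁₁²| ≤ 1, the quantity Γ₃ = (1/2)(−a₄ + 4a₂a₃ − (10/3)a₂³) satisfies Γ₃ = −ω₃₃ + 2ω₁₁(2ω₁₃ − ω₁₁²) − ω₁₁³ and hence |Γ₃| ≤ 10/3. -/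
/-- With `a₂, a₃, a₄` expressed via Grunsky coefficients subject to the Grunsky
inequalities, `Γ₃ = (1/2)(-a₄ + 4a₂a₃ - (10/3)a₂³)` satisfies
`Γ₃ = -ω₃₃ + 2ω₁₁(2ω₁₃ - ω₁₁²) - ω₁₁³` and hence `|Γ₃| ≤ 10/3`. -/
theorem Gamma3_grunsky (a2 a3 a4 ω11 ω13 ω33 : ℂ)
    (ha2 : a2 = 2 * ω11)
    (ha3 : a3 = 2 * ω13 + 3 * ω11 ^ 2)
    (ha4 : a4 = 2 * ω33 + 8 * ω11 * ω13 + (10 / 3) * ω11 ^ 3)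
    (h11 : ‖ω11‖ ≤ 1)
    (h1 : ‖ω13‖ ^ 2 + 3 * ‖ω33‖ ^ 2 ≤ 1 / 3)
    (h2 : ‖2 * ω13 - ω11 ^ 2‖ ≤ 1) :
    (1 / 2) * (-a4 + 4 * a2 * a3 - (10 / 3) * a2 ^ 3) =
        -ω33 + 2 * ω11 * (2 * ω13 - ω11 ^ 2) - ω11 ^ 3 ∧
      ‖(1 / 2) * (-a4 + 4 * a2 * a3 - (10 / 3) * a2 ^ 3)‖ ≤ 10 / 3 := by
  have heq : (1 / 2) * (-a4 + 4 * a2 * a3 - (10 / 3) * a2 ^ 3) =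
      -ω33 + 2 * ω11 * (2 * ω13 - ω11 ^ 2) - ω11 ^ 3 := by
    subst ha2 ha3 ha4; ring
  refine ⟨heq, ?_⟩
  rw [heq]
  have h33 : ‖ω33‖ ≤ 1 / 3 := by
    nlinarith [norm_nonneg ω33, norm_nonneg ω13, sq_nonneg ‖ω13‖]
  calc ‖-ω33 + 2 * ω11 * (2 * ω13 - ω11 ^ 2) - ω11 ^ 3‖
      ≤ ‖-ω33 + 2 * ω11 * (2 * ω13 - ω11 ^ 2)‖ + ‖ω11 ^ 3‖ := by
        exact norm_sub_le _ _
    _ ≤ ‖-ω33‖ + ‖2 * ω11 * (2 * ω13 - ω11 ^ 2)‖ +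
          ‖ω11 ^ 3‖ := by
        gcongr; exact norm_add_le _ _
    _ ≤ 1 / 3 + 2 * 1 * 1 + 1 := by
        have e1 : ‖-ω33‖ = ‖ω33‖ := norm_neg _
        have e2 : ‖2 * ω11 * (2 * ω13 - ω11 ^ 2)‖ =
            2 * ‖ω11‖ * ‖2 * ω13 - ω11 ^ 2‖ := by
          rw [norm_mul, norm_mul, Complex.norm_two]
        have e3 : ‖ω11 ^ 3‖ = ‖ω11‖ ^ 3 := by rw [norm_pow]
        rw [e1, e2, e3]
        have := norm_nonneg ω11
        have := norm_nonneg (2 * ω13 - ω11 ^ 2)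
        nlinarith [pow_le_one₀ (norm_nonneg ω11) h11 (n := 3)]
    _ ≤ 10 / 3 := by norm_num
end
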